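/- For all nonnegative integers n, the falling factorial satisfies X^(n) = B_n^* + sum_{k=1}^{n} (n/k) * s(n-1, k-1) * B_k(X), as an identity of polynomials. -/

import Mathlib

open Finset

/-- Stirling numbers of the second kind. -/
def stirling2 : ℕ → ℕ → ℕ
  | 0, 0 => 1
  | 0, _ + 1 => 0
  | _ + 1, 0 => 0
  | n + 1, k + 1 => stirling2 n k + (k + 1) * stirling2 n (k + 1)

/-- Signed Stirling numbers of the first kind. -/
def stirling1 : ℕ → ℕ → ℤ
  | 0, 0 => 1
  | 0, _ + 1 => 0
  | n + 1, 0 => -(n : ℤ) * stirling1 n 0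
  | n + 1, k + 1 => stirling1 n k - (n : ℤ) * stirling1 n (k + 1)

/-- Bernoulli numbers of the second kind: `∫₀¹ x(x-1)⋯(x-n+1) dx`. -/
noncomputable def bernoulliStar (n : ℕ) : ℝ :=
  ∫ x in (0:ℝ)..1, (descPochhammer ℝ n).eval x

open Polynomial in
lemma stirling1_eq_zero' : ∀ n k, n < k → stirling1 n k = 0 := by
  intro n
  induction n with
  | zero => intro k hk; match k, hk with | (m+1), _ => rfl
  | succ n ih =>
    intro k hk
    match k, hk with
    | (k+1), hk =>
      rw [stirling1, ih k (by omega), ih (k+1) (by omega), mul_zero, sub_zero]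

open Polynomial in
lemma desc_eval_eq (n : ℕ) (x : ℝ) :
    (descPochhammer ℝ n).eval x = ∑ k ∈ range (n+1), (stirling1 n k : ℝ) * x ^ k := by
  induction n with
  | zero => simp [stirling1]
  | succ n ih =>
    rw [descPochhammer_succ_eval, ih]
    have h0 : ∀ k ∈ range (n+1), (stirling1 (n+1) (k+1) : ℝ) * x^(k+1)
        = (stirling1 n k : ℝ) * x^k * x - (n:ℝ) * ((stirling1 n (k+1) : ℝ) * x^(k+1)) := by
      intro k _
      rw [stirling1]
      push_cast
      ring
    have htop : (stirling1 n (n+1) : ℝ) = 0 := by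
      rw [stirling1_eq_zero' n (n+1) (by omega)]; simp
    rw [Finset.sum_range_succ' (fun k => (stirling1 (n+1) k : ℝ) * x ^ k) (n+1),
        Finset.sum_congr rfl h0, Finset.sum_sub_distrib, ← Finset.mul_sum, ← Finset.sum_mul,
        Finset.sum_range_succ (fun k => (stirling1 n (k+1) : ℝ) * x ^ (k+1)) n, htop,
        Finset.sum_range_succ' (fun k => (stirling1 n k : ℝ) * x ^ k) n]
    show (_ + _ * x ^ 0) * (x - (n:ℝ)) = _
    rw [stirling1]
    push_cast
    ring

open Polynomial in
lemma bernoulliFun_add_one (k : ℕ) (x : ℝ) :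
    bernoulliFun k (x + 1) = bernoulliFun k x + k * x ^ (k - 1) := by
  have hq : (Polynomial.bernoulli k).comp (X + 1) =
      Polynomial.bernoulli k + (k : ℚ[X]) * X ^ (k - 1) := by
    apply Polynomial.funext
    intro y
    have := Polynomial.bernoulli_eval_one_add k y
    simp only [eval_comp, eval_add, eval_X, eval_one, eval_mul, eval_natCast, eval_pow]
    rw [add_comm y 1, this]
  have h2 := congrArg (fun p : ℚ[X] => (p.map (algebraMap ℚ ℝ)).eval x) hq
  simp only [Polynomial.map_comp, Polynomial.map_add, Polynomial.map_one, Polynomial.map_mul,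
    Polynomial.map_pow, Polynomial.map_natCast, map_X, eval_comp, eval_add, eval_X, eval_one,
    eval_mul, eval_natCast, eval_pow] at h2
  exact h2

open Polynomial in
lemma desc_eval_add_one (n : ℕ) (x : ℝ) :
    (descPochhammer ℝ n).eval (x + 1) =
      (descPochhammer ℝ n).eval x + n * (descPochhammer ℝ (n - 1)).eval x := by
  cases n with
  | zero => simp
  | succ m =>
    have h1 : (descPochhammer ℝ (m+1)).eval (x+1) = (x+1) * (descPochhammer ℝ m).eval x := by
      rw [descPochhammer_succ_left]
      simp [eval_comp]
    rw [h1, descPochhammer_succ_eval]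
    push_cast
    ring

theorem stmt3 (n : ℕ) :
    descPochhammer ℝ n = Polynomial.C (bernoulliStar n) +
      ∑ k ∈ Finset.Icc 1 n,
        Polynomial.C ((n : ℝ) / k * (stirling1 (n - 1) (k - 1) : ℝ)) *
          (Polynomial.bernoulli k).map (algebraMap ℚ ℝ) := by
  classical
  set c : ℕ → ℝ := fun k => (n : ℝ) / k * (stirling1 (n - 1) (k - 1) : ℝ) with hc
  set P : Polynomial ℝ := descPochhammer ℝ n - (Polynomial.C (bernoulliStar n) +
      ∑ k ∈ Finset.Icc 1 n,
        Polynomial.C (c k) * (Polynomial.bernoulli k).map (algebraMap ℚ ℝ)) with hP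
  have hPeval : ∀ x : ℝ, P.eval x = (descPochhammer ℝ n).eval x -
      (bernoulliStar n + ∑ k ∈ Finset.Icc 1 n, c k * bernoulliFun k x) := by
    intro x
    simp [hP, Polynomial.eval_finset_sum, bernoulliFun]
  -- periodicity
  have key : ∀ x : ℝ, P.eval (x + 1) = P.eval x := by
    intro x
    rw [hPeval, hPeval, desc_eval_add_one]
    have hsum : ∑ k ∈ Finset.Icc 1 n, c k * bernoulliFun k (x + 1)
        = (∑ k ∈ Finset.Icc 1 n, c k * bernoulliFun k x)
          + (n : ℝ) * (descPochhammer ℝ (n - 1)).eval x := by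
      have h1 : ∀ k ∈ Finset.Icc 1 n, c k * bernoulliFun k (x + 1)
          = c k * bernoulliFun k x + (n : ℝ) * (stirling1 (n-1) (k-1) : ℝ) * x ^ (k-1) := by
        intro k hk
        have hk1 : 1 ≤ k := (Finset.mem_Icc.mp hk).1
        have hkne : (k : ℝ) ≠ 0 := Nat.cast_ne_zero.mpr (by omega)
        rw [bernoulliFun_add_one, mul_add, hc]
        field_simp
      rw [Finset.sum_congr rfl h1, Finset.sum_add_distrib]
      congr 1
      rcases Nat.eq_zero_or_pos n with hn | hn
      · simp [hn]
      · have : ∑ k ∈ Finset.Icc 1 n, (n:ℝ) * (stirling1 (n-1) (k-1) : ℝ) * x ^ (k-1)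
            = ∑ j ∈ range n, (n:ℝ) * (stirling1 (n-1) j : ℝ) * x ^ j := by
          rw [show Finset.Icc 1 n = Finset.Ico 1 (n+1) by rfl, Finset.sum_Ico_eq_sum_range]
          simp
        rw [this, desc_eval_eq, Finset.mul_sum]
        have hn1 : n - 1 + 1 = n := by omega
        rw [hn1]
        exact Finset.sum_congr rfl (by intros; ring)
    rw [hsum]
    ring
  -- P is constant
  have hroots : ∀ m : ℕ, P.eval (m : ℝ) = P.eval 0 := by
    intro m
    induction m with
    | zero => simp
    | succ m ih => rw [Nat.cast_succ, key, ih]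
  have hconst : P = Polynomial.C (P.eval 0) := by
    have hz : P - Polynomial.C (P.eval 0) = 0 := by
      apply Polynomial.eq_zero_of_infinite_isRoot
      apply Set.infinite_of_injective_forall_mem (f := fun m : ℕ => (m : ℝ))
        Nat.cast_injective
      intro m
      simp only [Set.mem_setOf_eq, Polynomial.IsRoot, Polynomial.eval_sub, Polynomial.eval_C,
        hroots m, sub_self]
    exact sub_eq_zero.mp hz
  -- the constant is zero, by integrating over [0,1]
  have hintP : ∫ x in (0:ℝ)..1, P.eval x = P.eval 0 := by
    rw [hconst]
    simp
  have hintP' : ∫ x in (0:ℝ)..1, P.eval x = 0 := by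
    have hib : ∀ k : ℕ, IntervalIntegrable (fun x => c k * bernoulliFun k x)
        MeasureTheory.volume (0:ℝ) 1 := fun k =>
      ((continuous_const.mul (Polynomial.continuous _))).intervalIntegrable 0 1
    have hsum_cont : Continuous fun x : ℝ =>
        bernoulliStar n + ∑ k ∈ Finset.Icc 1 n, c k * bernoulliFun k x := by
      apply Continuous.add continuous_const
      exact continuous_finset_sum _ fun k _ => continuous_const.mul (Polynomial.continuous _)
    have : (∫ x in (0:ℝ)..1, P.eval x)
        = (∫ x in (0:ℝ)..1, (descPochhammer ℝ n).eval x)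
          - ∫ x in (0:ℝ)..1, (bernoulliStar n + ∑ k ∈ Finset.Icc 1 n, c k * bernoulliFun k x) := by
      rw [← intervalIntegral.integral_sub ((Polynomial.continuous _).intervalIntegrable 0 1)
        (hsum_cont.intervalIntegrable 0 1)]
      exact intervalIntegral.integral_congr fun x _ => hPeval x
    rw [this]
    have h2 : (∫ x in (0:ℝ)..1, (bernoulliStar n + ∑ k ∈ Finset.Icc 1 n, c k * bernoulliFun k x))
        = bernoulliStar n := by
      have hgint : IntervalIntegrable (fun x : ℝ => ∑ k ∈ Finset.Icc 1 n, c k * bernoulliFun k x)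
          MeasureTheory.volume (0:ℝ) 1 := by
        apply Continuous.intervalIntegrable
        exact continuous_finset_sum _ fun k _ => continuous_const.mul (Polynomial.continuous _)
      rw [intervalIntegral.integral_add intervalIntegrable_const hgint]
      rw [intervalIntegral.integral_finset_sum (fun k _ => hib k)]
      have h3 : ∀ k ∈ Finset.Icc 1 n, (∫ x in (0:ℝ)..1, c k * bernoulliFun k x) = 0 := by
        intro k hk
        rw [intervalIntegral.integral_const_mul,
          integral_bernoulliFun_eq_zero (by have := (Finset.mem_Icc.mp hk).1; omega), mul_zero]
      rw [Finset.sum_congr rfl h3]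
      simp
    rw [h2, bernoulliStar, sub_self]
  have h0 : P.eval 0 = 0 := by rw [← hintP, hintP']
  have hP0 : P = 0 := by rw [hconst, h0, map_zero]
  exact sub_eq_zero.mp (hP ▸ hP0)
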